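/- For every k > 0, there exists a TL[#←] formula of depth k+1 that solves the next-token prediction problem for L_{k+3}, but no TL[#←] formula of depth k solves the next-token prediction problem for L_{k+3}. -/

import Mathlib

inductive Letter : Type
  | a : Letter
  | b : Letter
deriving DecidableEq

instance : Fintype Letter := ⟨{Letter.a, Letter.b}, fun x => by cases x <;> simp⟩

def Letter.other : Letter → Letter
  | .a => .b
  | .b => .a

@[simp] lemma Letter.other_ne (c : Letter) : c.other ≠ c := by cases c <;> simp [Letter.other]

@[simp] lemma Letter.other_other (c : Letter) : c.other.other = c := by cases c <;> rfl

def blocks : Letter → List ℕ → List Letter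
  | _, [] => []
  | c, n :: t => List.replicate n c ++ blocks c.other t

@[simp] lemma blocks_nil (c : Letter) : blocks c [] = [] := rfl

@[simp] lemma blocks_cons (c : Letter) (n : ℕ) (t : List ℕ) :
    blocks c (n :: t) = List.replicate n c ++ blocks c.other t := rfl

@[simp] lemma blocks_length (c : Letter) (l : List ℕ) : (blocks c l).length = l.sum := by
  induction l generalizing c with
  | nil => rfl
  | cons n t ih => simp [blocks, ih]

def idx : List ℕ → ℕ → ℕ
  | [], _ => 0
  | n :: t, p => if p < n then 0 else idx t (p - n) + 1

def cut : List ℕ → ℕ → List ℕ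
  | [], _ => []
  | n :: t, i => if i ≤ n then [i] else n :: cut t (i - n)

lemma blocks_head? (c : Letter) (l : List ℕ) (hne : l ≠ []) (hpos : ∀ n ∈ l, 0 < n) :
    (blocks c l).head? = some c := by
  match l with
  | n :: t =>
    have hn : 0 < n := hpos n (by simp)
    match n, hn with
    | (m+1), _ => simp [blocks, List.replicate_succ]

lemma repl_cancel (c : Letter) : ∀ (n n' : ℕ) (x x' : List Letter),
    x.head? ≠ some c → x'.head? ≠ some c →
    List.replicate n c ++ x = List.replicate n' c ++ x' → n = n' ∧ x = x' := by
  intro n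
  induction n with
  | zero =>
    intro n' x x' hx hx' h
    cases n' with
    | zero => simpa using h
    | succ m =>
      exfalso; apply hx
      simp only [List.replicate, List.nil_append, List.cons_append] at h
      rw [h]; rfl
  | succ m ih =>
    intro n' x x' hx hx' h
    cases n' with
    | zero =>
      exfalso; apply hx'
      simp only [List.replicate, List.nil_append, List.cons_append] at h
      rw [← h]; rfl
    | succ m' =>
      simp only [List.replicate_succ, List.cons_append, List.cons.injEq] at h
      obtain ⟨hn, hx2⟩ := ih m' x x' hx hx' h.2
      exact ⟨by omega, hx2⟩

lemma blocks_inj (c : Letter) : ∀ (l l' : List ℕ), (∀ n ∈ l, 0 < n) → (∀ n ∈ l', 0 < n) →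
    blocks c l = blocks c l' → l = l' := by
  intro l
  induction l generalizing c with
  | nil =>
    intro l' _ hpos' h
    cases l' with
    | nil => rfl
    | cons n t =>
      exfalso
      have := congrArg List.length h
      simp at this
      have := hpos' n (by simp)
      omega
  | cons n t ih =>
    intro l' hpos hpos' h
    cases l' with
    | nil =>
      exfalso
      have := congrArg List.length h
      simp at this
      have := hpos n (by simp)
      omega
    | cons n' t' =>
      simp only [blocks_cons] at h
      have hx : (blocks c.other t).head? ≠ some c := by
        cases ht : t with
        | nil => simp
        | cons m s =>
          rw [blocks_head? c.other (m :: s) (by simp) (by intro x hx; exact hpos x (by simp [ht, hx]))]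
          simp
      have hx' : (blocks c.other t').head? ≠ some c := by
        cases ht : t' with
        | nil => simp
        | cons m s =>
          rw [blocks_head? c.other (m :: s) (by simp) (by intro x hx; exact hpos' x (by simp [ht, hx]))]
          simp
      obtain ⟨h1, h2⟩ := repl_cancel c n n' _ _ hx hx' h
      have := ih c.other t' (fun x hx => hpos x (by simp [hx])) (fun x hx => hpos' x (by simp [hx])) h2
      rw [h1, this]
lemma blocks_getElem? (c : Letter) (l : List ℕ) (p : ℕ) (hp : p < l.sum) :
    (blocks c l)[p]? = some (if idx l p % 2 = 0 then c else c.other) := by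
  induction l generalizing c p with
  | nil => simp at hp
  | cons n t ih =>
    simp only [List.sum_cons] at hp
    rw [blocks_cons, List.getElem?_append, List.length_replicate]
    by_cases h : p < n
    · simp [h, List.getElem?_replicate, idx]
    · rw [if_neg h]
      have hlt : p - n < t.sum := by omega
      rw [ih c.other (p - n) hlt]
      simp only [idx, h, if_false]
      rcases Nat.even_or_odd (idx t (p - n)) with he | ho
      · have h1 : idx t (p - n) % 2 = 0 := Nat.even_iff.mp he
        have h2 : (idx t (p - n) + 1) % 2 ≠ 0 := by omega
        simp [h1, h2]
      · have h1 : idx t (p - n) % 2 ≠ 0 := by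
          have := Nat.odd_iff.mp ho; omega
        have h2 : (idx t (p - n) + 1) % 2 = 0 := by
          have := Nat.odd_iff.mp ho; omega
        simp [h1, h2]

lemma idx_lt_length (l : List ℕ) (p : ℕ) (hp : p < l.sum) : idx l p < l.length := by
  induction l generalizing p with
  | nil => simp at hp
  | cons n t ih =>
    simp only [idx, List.sum_cons] at hp ⊢
    by_cases h : p < n
    · simp [h]
    · simp only [h, if_false, List.length_cons]
      have := ih (p - n) (by omega)
      omega

lemma idx_mono (l : List ℕ) {p q : ℕ} (h : p ≤ q) : idx l p ≤ idx l q := by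
  induction l generalizing p q with
  | nil => simp [idx]
  | cons n t ih =>
    simp only [idx]
    by_cases hq : q < n
    · simp [show p < n by omega, hq]
    · by_cases hp : p < n
      · simp [hp, hq]
      · simp only [hp, hq, if_false]
        have := ih (show p - n ≤ q - n by omega)
        omega

lemma exists_idx (l : List ℕ) (hpos : ∀ n ∈ l, 0 < n) (p v : ℕ) (hv : v ≤ idx l p) :
    ∃ q ≤ p, idx l q = v := by
  induction l generalizing p v with
  | nil =>
    simp only [idx, Nat.le_zero] at hv
    exact ⟨0, Nat.zero_le _, by simp [idx, hv]⟩
  | cons n t ih =>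
    simp only [idx] at hv ⊢
    by_cases h : p < n
    · simp [h] at hv
      exact ⟨p, le_refl _, by simp [idx, h, hv]⟩
    · simp only [h, if_false] at hv
      cases v with
      | zero =>
        refine ⟨0, Nat.zero_le _, ?_⟩
        have : 0 < n := hpos n (by simp)
        simp [idx, this]
      | succ v' =>
        obtain ⟨q', hq', hidx⟩ := ih (fun x hx => hpos x (by simp [hx])) (p - n) v' (by omega)
        refine ⟨n + q', by omega, ?_⟩
        simp [idx, show ¬ n + q' < n by omega, hidx]

lemma idx_last (l : List ℕ) (hpos : ∀ n ∈ l, 0 < n) (hne : l ≠ []) :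
    idx l (l.sum - 1) = l.length - 1 := by
  induction l with
  | nil => simp at hne
  | cons n t ih =>
    have hn : 0 < n := hpos n (by simp)
    by_cases ht : t = []
    · subst ht; simp [idx, show n - 1 < n by omega]
    · have htpos : ∀ x ∈ t, 0 < x := fun x hx => hpos x (by simp [hx])
      have hts : 0 < t.sum := by
        cases t with
        | nil => simp at ht
        | cons m s => have := htpos m (by simp); simp only [List.sum_cons]; omega
      have hih := ih htpos ht
      have hlen : 0 < t.length := List.length_pos_iff.mpr ht
      simp only [idx, List.sum_cons, List.length_cons]
      have e2 : idx t (n + t.sum - 1 - n) = t.length - 1 := by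
        rw [show n + t.sum - 1 - n = t.sum - 1 by omega, hih]
      simp only [show ¬ (n + t.sum - 1 < n) by omega, if_false, e2]
      omega

lemma cut_sum (l : List ℕ) (i : ℕ) (h1 : 1 ≤ i) (h2 : i ≤ l.sum) : (cut l i).sum = i := by
  induction l generalizing i with
  | nil => simp at h2; omega
  | cons n t ih =>
    simp only [cut, List.sum_cons] at h2 ⊢
    by_cases h : i ≤ n
    · simp [h]
    · simp only [h, if_false, List.sum_cons]
      rw [ih (i - n) (by omega) (by omega)]
      omega

lemma cut_pos (l : List ℕ) (i : ℕ) (hpos : ∀ n ∈ l, 0 < n) (h1 : 1 ≤ i) :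
    ∀ n ∈ cut l i, 0 < n := by
  induction l generalizing i with
  | nil => simp [cut]
  | cons n t ih =>
    simp only [cut]
    by_cases h : i ≤ n
    · simp [h]; omega
    · simp only [h, if_false]
      intro x hx
      rcases List.mem_cons.mp hx with h' | h'
      · subst h'; exact hpos x (by simp)
      · exact ih (i - n) (fun y hy => hpos y (by simp [hy])) (by omega) x h'

lemma cut_length (l : List ℕ) (i : ℕ) (h1 : 1 ≤ i) (h2 : i ≤ l.sum) :
    (cut l i).length = idx l (i - 1) + 1 := by
  induction l generalizing i with
  | nil => simp at h2; omega
  | cons n t ih =>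
    simp only [cut, idx, List.sum_cons] at h2 ⊢
    by_cases h : i ≤ n
    · simp [h, show i - 1 < n by omega]
    · simp only [h, if_false, List.length_cons]
      rw [if_neg (by omega), ih (i - n) (by omega) (by omega)]
      have : i - 1 - n = i - n - 1 := by omega
      rw [this]

lemma blocks_take (c : Letter) (l : List ℕ) (i : ℕ) (h1 : 1 ≤ i) (h2 : i ≤ l.sum) :
    (blocks c l).take i = blocks c (cut l i) := by
  induction l generalizing c i with
  | nil => simp at h2; omega
  | cons n t ih =>
    simp only [blocks_cons, cut, List.sum_cons] at h2 ⊢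
    by_cases h : i ≤ n
    · rw [if_pos h]
      simp only [blocks_cons, blocks_nil, List.append_nil]
      rw [List.take_append]
      simp [List.take_replicate, min_eq_left h, show i - n = 0 by omega]
    · rw [if_neg h]
      simp only [blocks_cons]
      rw [List.take_append]
      rw [List.take_of_length_le (show (List.replicate n c).length ≤ i by simp; omega)]
      rw [List.length_replicate, ih c.other (i - n) (by omega) (by omega)]
def aplus : Language Letter := {w | w ≠ [] ∧ ∀ c ∈ w, c = Letter.a}
def bplus : Language Letter := {w | w ≠ [] ∧ ∀ c ∈ w, c = Letter.b}

def altplus (k : ℕ) : Language Letter :=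
  if k % 2 = 0 then (aplus * bplus) ^ (k / 2)
  else (aplus * bplus) ^ (k / 2) * aplus

lemma blocks_append (c : Letter) (l l' : List ℕ) :
    blocks c (l ++ l') = blocks c l ++ blocks (if l.length % 2 = 0 then c else c.other) l' := by
  induction l generalizing c with
  | nil => simp
  | cons n t ih =>
    simp only [List.cons_append, blocks_cons, ih c.other, List.append_assoc, List.length_cons]
    by_cases h : t.length % 2 = 0
    · rw [if_pos h, if_neg (by omega)]
    · rw [if_neg h, if_pos (by omega), Letter.other_other]

lemma mem_aplus (w : List Letter) : w ∈ aplus ↔ ∃ n, 0 < n ∧ w = List.replicate n Letter.a := by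
  constructor
  · rintro ⟨hne, hall⟩
    exact ⟨w.length, List.length_pos_iff.mpr hne, (List.eq_replicate_iff.mpr ⟨rfl, hall⟩)⟩
  · rintro ⟨n, hn, rfl⟩
    refine ⟨by simp; omega, by intro c hc; exact List.eq_of_mem_replicate hc⟩

lemma mem_bplus (w : List Letter) : w ∈ bplus ↔ ∃ n, 0 < n ∧ w = List.replicate n Letter.b := by
  constructor
  · rintro ⟨hne, hall⟩
    exact ⟨w.length, List.length_pos_iff.mpr hne, (List.eq_replicate_iff.mpr ⟨rfl, hall⟩)⟩
  · rintro ⟨n, hn, rfl⟩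
    refine ⟨by simp; omega, by intro c hc; exact List.eq_of_mem_replicate hc⟩

lemma blocks_pair (n m : ℕ) :
    blocks Letter.a [n, m] = List.replicate n Letter.a ++ List.replicate m Letter.b := by
  simp [blocks, Letter.other]

lemma mem_ab_pow (p : ℕ) (w : List Letter) :
    w ∈ (aplus * bplus) ^ p ↔
      ∃ l : List ℕ, l.length = 2 * p ∧ (∀ n ∈ l, 0 < n) ∧ w = blocks Letter.a l := by
  induction p generalizing w with
  | zero =>
    simp only [pow_zero, Language.mem_one]
    constructor
    · rintro rfl; exact ⟨[], by simp⟩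
    · rintro ⟨l, hl, _, rfl⟩
      have : l = [] := List.eq_nil_of_length_eq_zero (by omega)
      simp [this]
  | succ p ih =>
    rw [pow_succ, Language.mem_mul]
    constructor
    · rintro ⟨u, hu, v, hv, rfl⟩
      obtain ⟨l, hl, hpos, rfl⟩ := (ih _).mp hu
      rw [Language.mem_mul] at hv
      obtain ⟨x, hx, y, hy, rfl⟩ := hv
      obtain ⟨n, hn, rfl⟩ := (mem_aplus x).mp hx
      obtain ⟨m, hm, rfl⟩ := (mem_bplus y).mp hy
      refine ⟨l ++ [n, m], by simp [hl]; ring, ?_, ?_⟩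
      · intro x hx
        rcases List.mem_append.mp hx with h | h
        · exact hpos x h
        · simp at h; rcases h with rfl | rfl <;> omega
      · rw [blocks_append, if_pos (by omega), blocks_pair]
    · rintro ⟨l, hl, hpos, rfl⟩
      have hne : l ≠ [] := by intro h; subst h; simp at hl
      have hlen₁ : (l.take (2 * p)).length = 2 * p := by simp; omega
      have hlen₂ : (l.drop (2 * p)).length = 2 := by simp; omega
      obtain ⟨n, m, hnm⟩ : ∃ n m, l.drop (2 * p) = [n, m] := by
        match hd : l.drop (2 * p), hlen₂ with
        | [n, m], _ => exact ⟨n, m, rfl⟩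
      have hsplit : l = l.take (2 * p) ++ [n, m] := by
        rw [← hnm]; exact (List.take_append_drop (2 * p) l).symm
      rw [hsplit, blocks_append, if_pos (by omega), blocks_pair]
      refine ⟨blocks Letter.a (l.take (2 * p)), (ih _).mpr ⟨l.take (2 * p), hlen₁, ?_, rfl⟩, _, ?_,
        rfl⟩
      · intro x hx; exact hpos x (by rw [hsplit]; exact List.mem_append.mpr (Or.inl hx))
      · rw [Language.mem_mul]
        have hn : 0 < n := hpos n (by rw [hsplit]; simp)
        have hm : 0 < m := hpos m (by rw [hsplit]; simp)
        exact ⟨_, (mem_aplus _).mpr ⟨n, hn, rfl⟩, _, (mem_bplus _).mpr ⟨m, hm, rfl⟩, rfl⟩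

lemma mem_altplus (m : ℕ) (w : List Letter) :
    w ∈ altplus m ↔ ∃ l : List ℕ, l.length = m ∧ (∀ n ∈ l, 0 < n) ∧ w = blocks Letter.a l := by
  unfold altplus
  by_cases h : m % 2 = 0
  · rw [if_pos h, mem_ab_pow]
    constructor
    · rintro ⟨l, hl, hpos, rfl⟩; exact ⟨l, by omega, hpos, rfl⟩
    · rintro ⟨l, hl, hpos, rfl⟩; exact ⟨l, by omega, hpos, rfl⟩
  · rw [if_neg h, Language.mem_mul]
    constructor
    · rintro ⟨u, hu, v, hv, rfl⟩
      obtain ⟨l, hl, hpos, rfl⟩ := (mem_ab_pow _ _).mp hu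
      obtain ⟨n, hn, rfl⟩ := (mem_aplus v).mp hv
      refine ⟨l ++ [n], by simp [hl]; omega, ?_, ?_⟩
      · intro x hx
        rcases List.mem_append.mp hx with h' | h'
        · exact hpos x h'
        · simp at h'; omega
      · rw [blocks_append, if_pos (by omega)]
        simp [blocks]
    · rintro ⟨l, hl, hpos, rfl⟩
      have hne : l ≠ [] := by intro hh; subst hh; simp at hl; omega
      have hsplit : l = l.dropLast ++ [l.getLast hne] := (List.dropLast_append_getLast hne).symm
      have hlen : l.dropLast.length = m - 1 := by simp [hl]
      rw [hsplit, blocks_append, if_pos (by rw [hlen]; omega)]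
      refine ⟨blocks Letter.a l.dropLast,
        (mem_ab_pow _ _).mpr ⟨l.dropLast, by rw [hlen]; omega, ?_, rfl⟩, _, ?_, rfl⟩
      · intro x hx; exact hpos x (by rw [hsplit]; exact List.mem_append.mpr (Or.inl hx))
      · have := hpos (l.getLast hne) (List.getLast_mem hne)
        rw [mem_aplus]
        exact ⟨_, this, by simp [blocks]⟩

lemma altplus_unique {m m' : ℕ} {w : List Letter} (h : w ∈ altplus m) (h' : w ∈ altplus m') :
    m = m' := by
  obtain ⟨l, hl, hpos, rfl⟩ := (mem_altplus m w).mp h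
  obtain ⟨l', hl', hpos', he⟩ := (mem_altplus m' _).mp h'
  have := blocks_inj Letter.a l l' hpos hpos' he
  subst this; omega

lemma take_mem_altplus (l : List ℕ) (hpos : ∀ n ∈ l, 0 < n) (i : ℕ) (h1 : 1 ≤ i)
    (h2 : i ≤ l.sum) : (blocks Letter.a l).take i ∈ altplus (idx l (i - 1) + 1) := by
  rw [blocks_take _ _ _ h1 h2, mem_altplus]
  exact ⟨cut l i, cut_length l i h1 h2, cut_pos l i hpos h1, rfl⟩
mutual
  inductive TLFormula (σ : Type) : Type
    | sym : σ → TLFormula σ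
    | lt : TLTerm σ → TLTerm σ → TLFormula σ
    | not : TLFormula σ → TLFormula σ
    | and : TLFormula σ → TLFormula σ → TLFormula σ
  inductive TLTerm (σ : Type) : Type
    | countL : TLFormula σ → TLTerm σ
    | add : TLTerm σ → TLTerm σ → TLTerm σ
    | one : TLTerm σ
end

mutual
  def TLFormula.sat {σ : Type} [DecidableEq σ] : TLFormula σ → List σ → ℕ → Bool
    | .sym c, w, i => decide (w[i]? = some c)
    | .lt t₁ t₂, w, i => decide (TLTerm.val t₁ w i < TLTerm.val t₂ w i)
    | .not φ, w, i => !(TLFormula.sat φ w i)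
    | .and φ₁ φ₂, w, i => TLFormula.sat φ₁ w i && TLFormula.sat φ₂ w i
  def TLTerm.val {σ : Type} [DecidableEq σ] : TLTerm σ → List σ → ℕ → ℕ
    | .countL φ, w, i => ((List.range (i + 1)).filter (fun j => TLFormula.sat φ w j)).length
    | .add t₁ t₂, w, i => TLTerm.val t₁ w i + TLTerm.val t₂ w i
    | .one, _, _ => 1
end

mutual
  def TLFormula.depth {σ : Type} : TLFormula σ → ℕ
    | .sym _ => 0
    | .lt t₁ t₂ => max (TLTerm.depth t₁) (TLTerm.depth t₂)
    | .not φ => TLFormula.depth φ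
    | .and φ₁ φ₂ => max (TLFormula.depth φ₁) (TLFormula.depth φ₂)
  def TLTerm.depth {σ : Type} : TLTerm σ → ℕ
    | .countL φ => TLFormula.depth φ + 1
    | .add t₁ t₂ => max (TLTerm.depth t₁) (TLTerm.depth t₂)
    | .one => 0
end

def TLFormula.defines {σ : Type} [DecidableEq σ] (φ : TLFormula σ) (L : Set (List σ)) : Prop :=
  ∀ w : List σ, w ≠ [] → (w ∈ L ↔ φ.sat w (w.length - 1) = true)

def SolvesNTP (φ : TLFormula Letter) (k : ℕ) : Prop :=
  ∀ w ∈ altplus k, ∀ i : ℕ, 1 ≤ i → i ≤ w.length →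
    (w.take i ∈ altplus k ↔ φ.sat (w.take i) (i - 1) = true)

/-! ### Counting helpers -/

def cntF (f : ℕ → Bool) (n : ℕ) : ℕ := ((List.range n).filter f).length

lemma val_countL {σ : Type} [DecidableEq σ] (φ : TLFormula σ) (w : List σ) (i : ℕ) :
    (TLTerm.countL φ).val w i = cntF (fun j => φ.sat w j) (i + 1) := rfl

lemma cntF_succ (f : ℕ → Bool) (n : ℕ) :
    cntF f (n + 1) = cntF f n + (if f n then 1 else 0) := by
  unfold cntF
  rw [List.range_succ, List.filter_append]
  by_cases h : f n <;> simp [h]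

lemma cntF_mono (f : ℕ → Bool) {m n : ℕ} (h : m ≤ n) : cntF f m ≤ cntF f n := by
  obtain ⟨d, rfl⟩ := Nat.exists_eq_add_of_le h
  induction d with
  | zero => simp
  | succ d ih =>
    rw [show m + (d+1) = (m+d)+1 by ring, cntF_succ]
    split <;> omega

lemma cntF_le_add (f : ℕ → Bool) (a b : ℕ) : cntF f (a + b) ≤ cntF f a + b := by
  induction b with
  | zero => simp
  | succ b ih =>
    rw [show a + (b+1) = (a+b)+1 by ring, cntF_succ]
    split <;> omega

lemma cntF_const (f : ℕ → Bool) (a b : ℕ) (v : Bool)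
    (h : ∀ p, a ≤ p → p < a + b → f p = v) :
    cntF f (a + b) = cntF f a + (if v then b else 0) := by
  induction b with
  | zero => simp
  | succ b ih =>
    rw [show a + (b+1) = (a+b)+1 by ring, cntF_succ,
      ih (fun p h1 h2 => h p h1 (by omega)), h (a+b) (by omega) (by omega)]
    cases v <;> simp <;> omega

lemma cntF_pos_iff (f : ℕ → Bool) (n : ℕ) : 0 < cntF f n ↔ ∃ p < n, f p = true := by
  unfold cntF
  rw [List.length_pos_iff]
  constructor
  · intro h
    obtain ⟨x, hx⟩ := List.exists_mem_of_ne_nil _ h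
    have := List.mem_filter.mp hx
    exact ⟨x, List.mem_range.mp this.1, this.2⟩
  · rintro ⟨p, hp, hf⟩
    intro hnil
    have : p ∈ (List.range n).filter f := List.mem_filter.mpr ⟨List.mem_range.mpr hp, hf⟩
    rw [hnil] at this
    simp at this

/-! ### Satisfaction only depends on the prefix -/

mutual
theorem TLFormula.sat_take {σ : Type} [DecidableEq σ] (φ : TLFormula σ) (w : List σ) (n i : ℕ)
    (h : i < n) : φ.sat (w.take n) i = φ.sat w i := by
  match φ with
  | .sym c =>
    simp only [TLFormula.sat]
    rw [List.getElem?_take]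
    simp [h]
  | .lt t₁ t₂ =>
    simp only [TLFormula.sat, TLTerm.val_take t₁ w n i h, TLTerm.val_take t₂ w n i h]
  | .not ψ => simp only [TLFormula.sat, TLFormula.sat_take ψ w n i h]
  | .and ψ₁ ψ₂ =>
    simp only [TLFormula.sat, TLFormula.sat_take ψ₁ w n i h, TLFormula.sat_take ψ₂ w n i h]
theorem TLTerm.val_take {σ : Type} [DecidableEq σ] (t : TLTerm σ) (w : List σ) (n i : ℕ)
    (h : i < n) : t.val (w.take n) i = t.val w i := by
  match t with
  | .countL φ =>
    simp only [TLTerm.val]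
    congr 1
    apply List.filter_congr
    intro j hj
    have hjn : j < n := by have := List.mem_range.mp hj; omega
    rw [TLFormula.sat_take φ w n j hjn]
  | .add t₁ t₂ =>
    simp only [TLTerm.val, TLTerm.val_take t₁ w n i h, TLTerm.val_take t₂ w n i h]
  | .one => rfl
end
/-! ### The upper bound: formulas `chi m` -/

def chi : ℕ → TLFormula Letter
  | 0 => .sym .a
  | 1 => .sym .a
  | 2 => .sym .b
  | (m+3) => .and (.sym (if (m+3) % 2 = 1 then .a else .b))
      (.not (.lt (.countL (chi (m+2))) .one))

lemma chi_succ (m : ℕ) (h : 2 ≤ m) :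
    chi (m+1) = .and (.sym (if (m+1) % 2 = 1 then .a else .b))
      (.not (.lt (.countL (chi m)) .one)) := by
  match m, h with
  | (k+2), _ => rfl

lemma chi_depth (m : ℕ) : (chi (m+2)).depth = m := by
  induction m with
  | zero => rfl
  | succ m ih =>
    rw [show m + 1 + 2 = (m + 2) + 1 by ring, chi_succ (m+2) (by omega)]
    simp only [TLFormula.depth, TLTerm.depth, ih]
    omega

lemma chi_sat (l : List ℕ) (hpos : ∀ n ∈ l, 0 < n) (m : ℕ) (hm : 1 ≤ m) (p : ℕ)
    (hp : p < l.sum) :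
    (chi m).sat (blocks Letter.a l) p =
      decide (m ≤ idx l p + 1 ∧ (idx l p + 1) % 2 = m % 2) := by
  induction m using Nat.strong_induction_on generalizing p with
  | _ m ih =>
  match m, hm with
  | 1, _ =>
    show (TLFormula.sym Letter.a).sat _ p = _
    simp only [TLFormula.sat, blocks_getElem? Letter.a l p hp]
    by_cases h : idx l p % 2 = 0
    · simp [h, Letter.other]
      omega
    · rw [if_neg h]
      simp [Letter.other]
      omega
  | 2, _ =>
    show (TLFormula.sym Letter.b).sat _ p = _
    simp only [TLFormula.sat, blocks_getElem? Letter.a l p hp]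
    by_cases h : idx l p % 2 = 0
    · simp [h, Letter.other]
      omega
    · rw [if_neg h]
      simp [Letter.other]
      omega
  | (m+3), _ =>
    rw [show m + 3 = (m + 2) + 1 by ring, chi_succ (m+2) (by omega)]
    have ihm := fun (q : ℕ) (hq : q < l.sum) => ih (m+2) (by omega) (by omega) q hq
    simp only [TLFormula.sat, val_countL]
    have hcnt : (0 < cntF (fun j => (chi (m+2)).sat (blocks Letter.a l) j) (p + 1)) ↔
        (m + 2 ≤ idx l p + 1) := by
      rw [cntF_pos_iff]
      constructor
      · rintro ⟨q, hq, hsat⟩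
        have hql : q < l.sum := by omega
        rw [ihm q hql] at hsat
        have := (decide_eq_true_eq.mp hsat).1
        have := idx_mono l (show q ≤ p by omega)
        omega
      · intro hle
        obtain ⟨q, hq, hidx⟩ := exists_idx l hpos p (m+1) (by omega)
        refine ⟨q, by omega, ?_⟩
        rw [ihm q (by omega)]
        simp only [decide_eq_true_eq]
        omega
    have hval : (TLTerm.one : TLTerm Letter).val (blocks Letter.a l) p = 1 := rfl
    rw [hval]
    simp only [blocks_getElem? Letter.a l p hp]
    by_cases hpar : (m + 2 + 1) % 2 = 1
    · rw [if_pos hpar]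
      by_cases h : idx l p % 2 = 0
      · simp only [h, if_pos rfl]
        by_cases hc : m + 2 ≤ idx l p + 1
        · have h1 : ¬ (cntF (fun j => (chi (m+2)).sat (blocks Letter.a l) j) (p + 1) < 1) := by
            have := hcnt.mpr hc; omega
          simp [h1]
          omega
        · have h1 : (cntF (fun j => (chi (m+2)).sat (blocks Letter.a l) j) (p + 1) < 1) := by
            by_contra hcon
            exact hc (hcnt.mp (by omega))
          simp [h1]
          omega
      · rw [if_neg h]
        simp [Letter.other]
        omega
    · rw [if_neg hpar]
      by_cases h : idx l p % 2 = 0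
      · simp [h, Letter.other]
        omega
      · rw [if_neg h]
        simp only [Letter.other]
        by_cases hc : m + 2 ≤ idx l p + 1
        · have h1 : ¬ (cntF (fun j => (chi (m+2)).sat (blocks Letter.a l) j) (p + 1) < 1) := by
            have := hcnt.mpr hc; omega
          simp [h1]
          omega
        · have h1 : (cntF (fun j => (chi (m+2)).sat (blocks Letter.a l) j) (p + 1) < 1) := by
            by_contra hcon
            exact hc (hcnt.mp (by omega))
          simp [h1]
          omega

theorem chi_solves (k : ℕ) : SolvesNTP (chi (k+3)) (k+3) := by
  intro w hw i h1 h2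
  obtain ⟨l, hl, hpos, rfl⟩ := (mem_altplus _ _).mp hw
  rw [blocks_length] at h2
  have hi1 : i - 1 < l.sum := by omega
  have hBlt : idx l (i-1) + 1 ≤ k + 3 := by
    have := idx_lt_length l (i-1) hi1
    omega
  have hprefmem := take_mem_altplus l hpos i h1 h2
  have hcl : (cut l i).sum = i := cut_sum l i h1 h2
  have hclpos := cut_pos l i hpos h1
  have hclne : cut l i ≠ [] := by
    intro h; rw [h] at hcl; simp at hcl; omega
  have hidxcut : idx (cut l i) (i - 1) = idx l (i - 1) := by
    have := idx_last (cut l i) hclpos hclne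
    rw [hcl] at this
    rw [this, cut_length l i h1 h2]
    omega
  rw [blocks_take Letter.a l i h1 h2]
  rw [chi_sat (cut l i) hclpos (k+3) (by omega) (i-1) (by omega)]
  rw [hidxcut]
  constructor
  · intro hmem
    have := altplus_unique hmem (by rw [← blocks_take Letter.a l i h1 h2]; exact hprefmem)
    simp only [decide_eq_true_eq]
    omega
  · intro hsat
    have : idx l (i-1) + 1 = k + 3 := by
      have := decide_eq_true_eq.mp hsat
      omega
    rw [← blocks_take Letter.a l i h1 h2]
    rw [← this]
    exact hprefmem
/-! ### The lower bound: the word with geometrically decreasing blocks -/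

def NN (B M b : ℕ) : ℕ := M ^ (B - b)
def SS (B M b : ℕ) : ℕ := ((List.range b).map (NN B M)).sum
def blist (B M : ℕ) : List ℕ := (List.range B).map (NN B M)
def Wd (B M : ℕ) : List Letter := blocks Letter.a (blist B M)

lemma SS_succ (B M b : ℕ) : SS B M (b+1) = SS B M b + NN B M b := by
  simp [SS, List.range_succ]

lemma NN_pos {M : ℕ} (hM : 1 ≤ M) (B b : ℕ) : 0 < NN B M b := Nat.pow_pos hM

lemma NN_ge_M {B M b : ℕ} (hb : b < B) : M ≤ NN B M b := by
  calc M = M ^ 1 := (pow_one M).symm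
  _ ≤ M ^ (B - b) := by
      rcases Nat.eq_zero_or_pos M with rfl | hM
      · simp [show B - b ≠ 0 by omega]
      · exact Nat.pow_le_pow_right hM (by omega)

lemma NN_succ_mul {B M b : ℕ} (hb : b < B) : NN B M b = NN B M (b+1) * M := by
  unfold NN
  rw [show B - b = (B - (b+1)) + 1 by omega, pow_succ]

lemma NN_mono {B M : ℕ} (hM : 1 ≤ M) {i j : ℕ} (h : i ≤ j) : NN B M j ≤ NN B M i :=
  Nat.pow_le_pow_right hM (by omega)

lemma blist_pos {B M : ℕ} (hM : 1 ≤ M) : ∀ n ∈ blist B M, 0 < n := by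
  intro n hn
  simp only [blist, List.mem_map] at hn
  obtain ⟨b, _, rfl⟩ := hn
  exact NN_pos hM B b

lemma blist_sum (B M : ℕ) : (blist B M).sum = SS B M B := rfl

lemma blist_length (B M : ℕ) : (blist B M).length = B := by simp [blist]

lemma Wd_length (B M : ℕ) : (Wd B M).length = SS B M B := by
  simp [Wd, blist_sum]

lemma range_map_decomp {α : Type} (f : ℕ → α) (b B : ℕ) (hb : b < B) :
    (List.range B).map f
      = (List.range b).map f ++ f b :: (List.range (B - b - 1)).map (fun i => f (b + 1 + i)) := by
  conv_lhs => rw [show B = b + 1 + (B - b - 1) by omega]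
  rw [List.range_add, List.range_succ, List.map_append, List.map_append, List.map_map]
  simp only [List.map_cons, List.map_nil]
  rw [List.append_assoc]
  congr 1

lemma blist_decomp {B M b : ℕ} (hb : b < B) :
    blist B M = ((List.range b).map (NN B M)) ++ NN B M b ::
      ((List.range (B - b - 1)).map (fun i => NN B M (b + 1 + i))) :=
  range_map_decomp (NN B M) b B hb

lemma idx_append_block (l1 : List ℕ) (n r : ℕ) (hr : r < n) (l2 : List ℕ) :
    idx (l1 ++ n :: l2) (l1.sum + r) = l1.length := by
  induction l1 with
  | nil => simp [idx, hr]
  | cons m t ih =>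
    simp only [List.cons_append, idx, List.sum_cons, List.length_cons]
    rw [if_neg (by omega), show m + t.sum + r - m = t.sum + r by omega]
    exact congrArg (· + 1) ih

lemma idx_W {B M b : ℕ} (hb : b < B) {r : ℕ} (hr : r < NN B M b) :
    idx (blist B M) (SS B M b + r) = b := by
  rw [blist_decomp hb]
  have := idx_append_block ((List.range b).map (NN B M)) (NN B M b) r hr
    ((List.range (B - b - 1)).map (fun i => NN B M (b + 1 + i)))
  simpa [SS] using this

lemma SS_add_lt {B M b : ℕ} (hb : b < B) {r : ℕ} (hr : r < NN B M b) :
    SS B M b + r < SS B M B := by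
  have h1 : SS B M B = SS B M b + (NN B M b + ((List.range (B - b - 1)).map
      (fun i => NN B M (b + 1 + i))).sum) := by
    rw [← blist_sum, blist_decomp hb]
    simp [SS]
  omega

lemma Wd_getElem {B M b : ℕ} (hb : b < B) {r : ℕ} (hM : 1 ≤ M) (hr : r < NN B M b) :
    (Wd B M)[SS B M b + r]? = some (if b % 2 = 0 then Letter.a else Letter.b) := by
  unfold Wd
  rw [blocks_getElem? Letter.a (blist B M) _ (by rw [blist_sum]; exact SS_add_lt hb hr)]
  rw [idx_W hb hr]
  by_cases h : b % 2 = 0 <;> simp [h, Letter.other]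

/-! Sign stability helpers over ℤ -/

lemma sign_stable {x y : ℤ} (h : |y| < |x|) : (x + y < 0 ↔ x < 0) := by
  rcases le_or_gt 0 x with hx | hx
  · rw [abs_of_nonneg hx] at h
    have := abs_lt.mp h
    constructor <;> intro <;> omega
  · rw [abs_of_neg hx] at h
    have := abs_lt.mp h
    constructor <;> intro <;> omega

lemma dominated_sum {B M : ℕ} (hM : 1 ≤ M) (c : ℕ) (e : ℕ → ℤ)
    (he : ∀ i, |e i| ≤ c) (b : ℕ) (hbB : b ≤ B) (i0 : ℕ) (hi0 : i0 < b)
    (hzero : ∀ i, i < i0 → e i = 0) (hne : e i0 ≠ 0) :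
    (NN B M i0 : ℤ) - c * B * NN B M (i0+1) ≤ |∑ i ∈ Finset.range b, e i * NN B M i| := by
  have hsplit : ∑ i ∈ Finset.range b, e i * NN B M i
      = e i0 * NN B M i0 + ∑ i ∈ Finset.Ico (i0+1) b, e i * NN B M i := by
    rw [Finset.range_eq_Ico, ← Finset.sum_Ico_consecutive _ (Nat.zero_le (i0+1)) (by omega),
      Finset.sum_Ico_succ_top (Nat.zero_le i0)]
    rw [show ∑ i ∈ Finset.Ico 0 i0, e i * NN B M i = 0 from
      Finset.sum_eq_zero (fun i hi => by rw [hzero i (Finset.mem_Ico.mp hi).2]; ring)]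
    ring
  have htail : |∑ i ∈ Finset.Ico (i0+1) b, e i * NN B M i| ≤ c * B * NN B M (i0+1) := by
    calc |∑ i ∈ Finset.Ico (i0+1) b, e i * NN B M i|
        ≤ ∑ i ∈ Finset.Ico (i0+1) b, |e i * NN B M i| := Finset.abs_sum_le_sum_abs _ _
      _ ≤ ∑ i ∈ Finset.Ico (i0+1) b, (c : ℤ) * NN B M (i0+1) := by
          apply Finset.sum_le_sum
          intro i hi
          rw [abs_mul]
          have h1 : |(NN B M i : ℤ)| = NN B M i := abs_of_nonneg (by positivity)
          rw [h1]
          have h2 : (NN B M i : ℤ) ≤ NN B M (i0+1) := by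
            exact_mod_cast NN_mono hM (Finset.mem_Ico.mp hi).1
          have h3 := he i
          have h4 : (0:ℤ) ≤ NN B M i := by positivity
          nlinarith [abs_nonneg (e i)]
      _ = ((b - (i0+1) : ℕ) : ℤ) * ((c : ℤ) * NN B M (i0+1)) := by
          rw [Finset.sum_const, Nat.card_Ico, nsmul_eq_mul]
      _ ≤ c * B * NN B M (i0+1) := by
          have h6 : (0:ℤ) ≤ (c:ℤ) * NN B M (i0+1) := by positivity
          have h7 : ((b - (i0+1) : ℕ) : ℤ) ≤ B := by push_cast; omega
          calc ((b - (i0+1) : ℕ) : ℤ) * ((c:ℤ) * NN B M (i0+1)) ≤ B * ((c:ℤ) * NN B M (i0+1)) :=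
            mul_le_mul_of_nonneg_right h7 h6
          _ = c * B * NN B M (i0+1) := by ring
  have hlow : (NN B M i0 : ℤ) ≤ |e i0 * NN B M i0| := by
    rw [abs_mul]
    have h1 : |(NN B M i0 : ℤ)| = NN B M i0 := abs_of_nonneg (by positivity)
    rw [h1]
    have h2 : (1:ℤ) ≤ |e i0| := by
      rcases lt_or_ge (e i0) 0 with h | h
      · rw [abs_of_neg h]; omega
      · rw [abs_of_nonneg h]; omega
    nlinarith [NN_pos hM B i0]
  calc (NN B M i0 : ℤ) - c * B * NN B M (i0+1)
      ≤ |e i0 * NN B M i0| - |∑ i ∈ Finset.Ico (i0+1) b, e i * NN B M i| := by omega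
    _ ≤ |∑ i ∈ Finset.range b, e i * NN B M i| := by
        rw [hsplit]
        have := abs_add_le (e i0 * NN B M i0 + ∑ i ∈ Finset.Ico (i0+1) b, e i * NN B M i)
          (-(∑ i ∈ Finset.Ico (i0+1) b, e i * NN B M i))
        simp only [add_neg_cancel_right, abs_neg] at this
        calc |e i0 * NN B M i0| - |∑ i ∈ Finset.Ico (i0+1) b, e i * NN B M i| ≤ _ := by omega
/-! ### The master induction for the lower bound -/

def TProp (B : ℕ) (t : TLTerm Letter) : Prop :=
  ∃ C : ℕ, 1 ≤ C ∧ ∀ M : ℕ, C ≤ M → ∃ (ε : ℕ → ℕ) (a : ℕ → ℤ),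
    (∀ b, ε b ≤ C) ∧
    (t.depth = 0 → ∀ b, ε b = 0) ∧
    (∀ b, b + 2 < B → t.depth ≤ b + 1 → ε b = ε (b + 2)) ∧
    (∀ b, b < B → ∀ r, C ≤ r → r < NN B M b →
      (t.val (Wd B M) (SS B M b + r) : ℤ) = a b + (ε b : ℤ) * r) ∧
    (∀ b, b < B → t.depth ≤ b → ∀ r, r < NN B M b →
      (t.val (Wd B M) (SS B M b + r) : ℤ) = a b + (ε b : ℤ) * r) ∧
    (∀ b, b ≤ B → |a b - ∑ i ∈ Finset.range b, (ε i : ℤ) * NN B M i| ≤ C) ∧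
    (∀ b, b + 1 < B → t.depth ≤ b →
      a (b + 1) = a b + (ε b : ℤ) * ((NN B M b : ℤ) - 1) + (ε (b + 1) : ℤ))

def FProp (B : ℕ) (φ : TLFormula Letter) : Prop :=
  ∃ C : ℕ, 1 ≤ C ∧ ∀ M : ℕ, C ≤ M → ∃ E : ℕ → Bool,
    (∀ b, b < B → ∀ r, C ≤ r → r < NN B M b →
      φ.sat (Wd B M) (SS B M b + r) = E b) ∧
    (∀ b, b < B → φ.depth + 1 ≤ b → ∀ r, r < NN B M b →
      φ.sat (Wd B M) (SS B M b + r) = E b) ∧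
    (∀ b, b + 2 < B → φ.depth ≤ b → E b = E (b + 2))

lemma sym_fprop (B : ℕ) (c : Letter) : FProp B (.sym c) := by
  refine ⟨1, le_refl _, fun M hM => ?_⟩
  refine ⟨fun b => decide ((if b % 2 = 0 then Letter.a else Letter.b) = c), ?_, ?_, ?_⟩
  · intro b hb r _ hr
    beta_reduce
    show decide ((Wd B M)[SS B M b + r]? = some c) = _
    rw [Wd_getElem hb hM hr]
    simp
  · intro b hb _ r hr
    beta_reduce
    show decide ((Wd B M)[SS B M b + r]? = some c) = _
    rw [Wd_getElem hb hM hr]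
    simp
  · intro b _ _
    beta_reduce
    have : (b + 2) % 2 = b % 2 := by omega
    rw [this]

lemma not_fprop (B : ℕ) (φ : TLFormula Letter) (h : FProp B φ) : FProp B (.not φ) := by
  obtain ⟨C, hC, hdata⟩ := h
  refine ⟨C, hC, fun M hM => ?_⟩
  obtain ⟨E, h1, h2, h3⟩ := hdata M hM
  refine ⟨fun b => !(E b), ?_, ?_, ?_⟩
  · intro b hb r hr1 hr2
    beta_reduce
    show (!(φ.sat (Wd B M) (SS B M b + r))) = (!(E b))
    rw [h1 b hb r hr1 hr2]
  · intro b hb hd r hr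
    beta_reduce
    show (!(φ.sat (Wd B M) (SS B M b + r))) = (!(E b))
    rw [h2 b hb (by simpa [TLFormula.depth] using hd) r hr]
  · intro b hb hd
    beta_reduce
    rw [h3 b hb (by simpa [TLFormula.depth] using hd)]

lemma and_fprop (B : ℕ) (φ₁ φ₂ : TLFormula Letter) (hf1 : FProp B φ₁) (hf2 : FProp B φ₂) :
    FProp B (.and φ₁ φ₂) := by
  obtain ⟨C₁, hC₁, hdata₁⟩ := hf1
  obtain ⟨C₂, hC₂, hdata₂⟩ := hf2
  refine ⟨C₁ + C₂, by omega, fun M hM => ?_⟩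
  obtain ⟨E₁, h11, h12, h13⟩ := hdata₁ M (by omega)
  obtain ⟨E₂, h21, h22, h23⟩ := hdata₂ M (by omega)
  have hd1 : φ₁.depth ≤ (TLFormula.and φ₁ φ₂).depth := by simp [TLFormula.depth]
  have hd2 : φ₂.depth ≤ (TLFormula.and φ₁ φ₂).depth := by simp [TLFormula.depth]
  have hdmax : (TLFormula.and φ₁ φ₂).depth = max φ₁.depth φ₂.depth := rfl
  refine ⟨fun b => E₁ b && E₂ b, ?_, ?_, ?_⟩
  · intro b hb r hr1 hr2
    beta_reduce
    show (φ₁.sat (Wd B M) (SS B M b + r) && φ₂.sat (Wd B M) (SS B M b + r)) = (E₁ b && E₂ b)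
    rw [h11 b hb r (by omega) hr2, h21 b hb r (by omega) hr2]
  · intro b hb hd r hr
    rw [hdmax] at hd
    beta_reduce
    show (φ₁.sat (Wd B M) (SS B M b + r) && φ₂.sat (Wd B M) (SS B M b + r)) = (E₁ b && E₂ b)
    rw [h12 b hb (by omega) r hr, h22 b hb (by omega) r hr]
  · intro b hb hd
    rw [hdmax] at hd
    beta_reduce
    rw [h13 b hb (by omega), h23 b hb (by omega)]

lemma one_tprop (B : ℕ) : TProp B .one := by
  refine ⟨1, le_refl _, fun M hM => ?_⟩
  refine ⟨fun _ => 0, fun _ => 1, by simp, by simp, by simp, ?_, ?_, ?_, by simp⟩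
  · intro b hb r hr1 hr2
    show ((1 : ℕ) : ℤ) = 1 + 0 * r
    push_cast; ring
  · intro b hb hd r hr
    show ((1 : ℕ) : ℤ) = 1 + 0 * r
    push_cast; ring
  · intro b hb
    simp

lemma add_tprop (B : ℕ) (t₁ t₂ : TLTerm Letter) (h1 : TProp B t₁) (h2 : TProp B t₂) :
    TProp B (.add t₁ t₂) := by
  obtain ⟨C₁, hC₁, hdata₁⟩ := h1
  obtain ⟨C₂, hC₂, hdata₂⟩ := h2
  refine ⟨C₁ + C₂, by omega, fun M hM => ?_⟩
  obtain ⟨ε₁, a₁, t11, t12, t13, t14, t15, t16, t17⟩ := hdata₁ M (by omega)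
  obtain ⟨ε₂, a₂, t21, t22, t23, t24, t25, t26, t27⟩ := hdata₂ M (by omega)
  have hdep : (TLTerm.add t₁ t₂).depth = max t₁.depth t₂.depth := rfl
  refine ⟨fun b => ε₁ b + ε₂ b, fun b => a₁ b + a₂ b, ?_, ?_, ?_, ?_, ?_, ?_, ?_⟩
  · intro b; beta_reduce; have := t11 b; have := t21 b; omega
  · intro hd b
    rw [hdep] at hd
    have hz1 : t₁.depth = 0 := by omega
    have hz2 : t₂.depth = 0 := by omega
    beta_reduce
    rw [t12 hz1 b, t22 hz2 b]
  · intro b hb hd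
    rw [hdep] at hd
    beta_reduce
    rw [t13 b hb (by omega), t23 b hb (by omega)]
  · intro b hb r hr1 hr2
    beta_reduce
    show ((t₁.val (Wd B M) (SS B M b + r) + t₂.val (Wd B M) (SS B M b + r) : ℕ) : ℤ)
      = a₁ b + a₂ b + ((ε₁ b + ε₂ b : ℕ) : ℤ) * r
    push_cast
    rw [t14 b hb r (by omega) hr2, t24 b hb r (by omega) hr2]
    ring
  · intro b hb hd r hr
    rw [hdep] at hd
    beta_reduce
    show ((t₁.val (Wd B M) (SS B M b + r) + t₂.val (Wd B M) (SS B M b + r) : ℕ) : ℤ)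
      = a₁ b + a₂ b + ((ε₁ b + ε₂ b : ℕ) : ℤ) * r
    push_cast
    rw [t15 b hb (by omega) r hr, t25 b hb (by omega) r hr]
    ring
  · intro b hb
    beta_reduce
    have e1 := t16 b hb
    have e2 := t26 b hb
    have : ∑ i ∈ Finset.range b, ((ε₁ i + ε₂ i : ℕ) : ℤ) * NN B M i
        = (∑ i ∈ Finset.range b, (ε₁ i : ℤ) * NN B M i)
          + ∑ i ∈ Finset.range b, (ε₂ i : ℤ) * NN B M i := by
      rw [← Finset.sum_add_distrib]
      apply Finset.sum_congr rfl
      intro i _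
      push_cast; ring
    rw [this]
    push_cast at *
    have := abs_add_le ((a₁ b) - ∑ i ∈ Finset.range b, (ε₁ i : ℤ) * NN B M i)
      ((a₂ b) - ∑ i ∈ Finset.range b, (ε₂ i : ℤ) * NN B M i)
    have heq : a₁ b + a₂ b - ((∑ i ∈ Finset.range b, (ε₁ i : ℤ) * NN B M i)
          + ∑ i ∈ Finset.range b, (ε₂ i : ℤ) * NN B M i)
        = ((a₁ b) - ∑ i ∈ Finset.range b, (ε₁ i : ℤ) * NN B M i)
          + ((a₂ b) - ∑ i ∈ Finset.range b, (ε₂ i : ℤ) * NN B M i) := by ring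
    rw [heq]
    omega
  · intro b hb hd
    rw [hdep] at hd
    beta_reduce
    rw [t17 b hb (by omega), t27 b hb (by omega)]
    push_cast; ring
/-! ### The `countL` case -/

lemma bool_cast_if (v : Bool) : (((if v then 1 else 0) : ℕ) : ℤ) = (if v then (1:ℤ) else 0) := by
  cases v <;> simp

lemma cnt_tail {B M : ℕ} (f : ℕ → Bool) (v : Bool) (Cφ b : ℕ)
    (hE : ∀ r, Cφ ≤ r → r < NN B M b → f (SS B M b + r) = v)
    (r : ℕ) (hr1 : Cφ ≤ r) (hr2 : r < NN B M b) :
    (cntF f (SS B M b + r + 1) : ℤ)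
      = (cntF f (SS B M b + Cφ + 1) : ℤ) + (if v then (1:ℤ) else 0) * ((r : ℤ) - Cφ) := by
  have hconst := cntF_const f (SS B M b + Cφ + 1) (r - Cφ) v ?_
  · rw [show SS B M b + Cφ + 1 + (r - Cφ) = SS B M b + r + 1 by omega] at hconst
    rw [hconst]
    cases v <;> push_cast <;> simp <;> omega
  · intro p hp1 hp2
    rw [show p = SS B M b + (p - SS B M b) by omega]
    exact hE _ (by omega) (by omega)

lemma cnt_full {B M : ℕ} (f : ℕ → Bool) (v : Bool) (b : ℕ)
    (hE : ∀ r, r < NN B M b → f (SS B M b + r) = v)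
    (r : ℕ) (hr : r < NN B M b) :
    (cntF f (SS B M b + r + 1) : ℤ)
      = (cntF f (SS B M b) : ℤ) + (if v then (1:ℤ) else 0) * ((r : ℤ) + 1) := by
  have hconst := cntF_const f (SS B M b) (r + 1) v ?_
  · rw [show SS B M b + (r + 1) = SS B M b + r + 1 by omega] at hconst
    rw [hconst]
    cases v <;> push_cast <;> simp
  · intro p hp1 hp2
    rw [show p = SS B M b + (p - SS B M b) by omega]
    exact hE _ (by omega)

lemma cnt_block_exact {B M : ℕ} (f : ℕ → Bool) (v : Bool) (b : ℕ)
    (hE : ∀ r, r < NN B M b → f (SS B M b + r) = v) :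
    (cntF f (SS B M (b+1)) : ℤ)
      = (cntF f (SS B M b) : ℤ) + (if v then (1:ℤ) else 0) * NN B M b := by
  have hconst := cntF_const f (SS B M b) (NN B M b) v ?_
  · rw [SS_succ, hconst]
    cases v <;> push_cast <;> simp
  · intro p hp1 hp2
    rw [show p = SS B M b + (p - SS B M b) by omega]
    exact hE _ (by omega)

lemma cnt_block_bound {B M : ℕ} (f : ℕ → Bool) (v : Bool) (Cφ b : ℕ)
    (hCN : Cφ ≤ NN B M b)
    (hE : ∀ r, Cφ ≤ r → r < NN B M b → f (SS B M b + r) = v) :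
    |(cntF f (SS B M (b+1)) : ℤ) - (cntF f (SS B M b) : ℤ)
      - (if v then (1:ℤ) else 0) * NN B M b| ≤ Cφ := by
  have hconst := cntF_const f (SS B M b + Cφ) (NN B M b - Cφ) v ?_
  · have h1 : cntF f (SS B M b) ≤ cntF f (SS B M b + Cφ) := cntF_mono f (by omega)
    have h2 : cntF f (SS B M b + Cφ) ≤ cntF f (SS B M b) + Cφ := cntF_le_add f _ _
    have h3 : SS B M b + Cφ + (NN B M b - Cφ) = SS B M (b+1) := by
      rw [SS_succ]; omega
    rw [h3] at hconst
    rw [abs_le]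
    cases v
    · simp only [if_neg Bool.false_ne_true] at hconst ⊢
      constructor <;> push_cast [hconst] <;> omega
    · simp only [if_pos rfl] at hconst ⊢
      have h4 : ((NN B M b - Cφ : ℕ) : ℤ) = (NN B M b : ℤ) - Cφ := by
        push_cast [Nat.cast_sub hCN]; ring
      constructor <;> push_cast [hconst, h4] <;> omega
  · intro p hp1 hp2
    rw [show p = SS B M b + (p - SS B M b) by omega]
    exact hE _ (by omega) (by omega)

lemma cnt_SS_bound {B M : ℕ} (f : ℕ → Bool) (E : ℕ → Bool) (Cφ : ℕ)
    (hCN : ∀ i, i < B → Cφ ≤ NN B M i)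
    (hE : ∀ i, i < B → ∀ r, Cφ ≤ r → r < NN B M i → f (SS B M i + r) = E i) :
    ∀ b, b ≤ B → |(cntF f (SS B M b) : ℤ)
      - ∑ i ∈ Finset.range b, (if E i then (1:ℤ) else 0) * NN B M i| ≤ (b : ℤ) * Cφ := by
  intro b
  induction b with
  | zero => simp [SS, cntF]
  | succ b ih =>
    intro hb
    have hprev := ih (by omega)
    have hblock := cnt_block_bound f (E b) Cφ b (hCN b (by omega)) (hE b (by omega))
    rw [Finset.sum_range_succ]
    have habs := abs_add_le ((cntF f (SS B M b) : ℤ)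
      - ∑ i ∈ Finset.range b, (if E i then (1:ℤ) else 0) * NN B M i)
      ((cntF f (SS B M (b+1)) : ℤ) - (cntF f (SS B M b) : ℤ)
        - (if E b then (1:ℤ) else 0) * NN B M b)
    have heq : (cntF f (SS B M b) : ℤ)
        - (∑ i ∈ Finset.range b, (if E i then (1:ℤ) else 0) * NN B M i)
        + ((cntF f (SS B M (b+1)) : ℤ) - (cntF f (SS B M b) : ℤ)
          - (if E b then (1:ℤ) else 0) * NN B M b)
        = (cntF f (SS B M (b+1)) : ℤ)
          - ((∑ i ∈ Finset.range b, (if E i then (1:ℤ) else 0) * NN B M i)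
            + (if E b then (1:ℤ) else 0) * NN B M b) := by ring
    rw [heq] at habs
    have : ((b:ℤ)+1) * Cφ = (b:ℤ) * Cφ + Cφ := by ring
    push_cast
    omega

lemma countL_tprop (B : ℕ) (φ : TLFormula Letter) (h : FProp B φ) : TProp B (.countL φ) := by
  obtain ⟨Cφ, hCφ, hdata⟩ := h
  have hCbig : Cφ + 2 ≤ (B + 6) * (Cφ + 2) := Nat.le_mul_of_pos_left _ (by omega)
  refine ⟨(B + 6) * (Cφ + 2), by omega, fun M hM => ?_⟩
  obtain ⟨E, h1, h2, h3⟩ := hdata M (by omega)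
  have hM1 : 1 ≤ M := by omega
  have hCN : ∀ i, i < B → Cφ ≤ NN B M i := fun i hi => le_trans (by omega) (NN_ge_M hi)
  have hCN1 : ∀ i, i < B → Cφ + 1 < NN B M i := fun i hi =>
    lt_of_lt_of_le (by omega) (NN_ge_M hi)
  have hdep : (TLTerm.countL φ).depth = φ.depth + 1 := rfl
  set f : ℕ → Bool := fun p => φ.sat (Wd B M) p with hf
  have hval : ∀ p, (TLTerm.countL φ).val (Wd B M) p = cntF f (p+1) := fun p => rfl
  -- a b := cntF f (SS b + Cφ + 1) - e b * Cφ
  refine ⟨fun b => if E b then 1 else 0,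
    fun b => (cntF f (SS B M b + Cφ + 1) : ℤ) - (if E b then (1:ℤ) else 0) * Cφ,
    ?_, ?_, ?_, ?_, ?_, ?_, ?_⟩
  · intro b; beta_reduce; split <;> omega
  · intro hd; rw [hdep] at hd; omega
  · intro b hb hd
    rw [hdep] at hd
    beta_reduce
    rw [h3 b hb (by omega)]
  · -- T3 tail affine
    intro b hb r hr1 hr2
    beta_reduce
    rw [hval, bool_cast_if]
    rw [show SS B M b + r + 1 = (SS B M b + r) + 1 from rfl]
    rw [cnt_tail f (E b) Cφ b (h1 b hb) r (by omega) hr2]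
    ring
  · -- T4 exact affine for deep blocks
    intro b hb hd r hr
    rw [hdep] at hd
    beta_reduce
    rw [hval, bool_cast_if]
    have hfull := cnt_full f (E b) b (fun r' hr' => h2 b hb (by omega) r' hr')
    rw [show SS B M b + r + 1 = (SS B M b + r) + 1 from rfl, hfull r hr]
    have hClt : Cφ < NN B M b := by have := hCN1 b hb; omega
    have := hfull Cφ hClt
    rw [show SS B M b + Cφ + 1 = (SS B M b + Cφ) + 1 from rfl, this]
    ring
  · -- T5
    intro b hb
    beta_reduce
    have hsum := cnt_SS_bound f E Cφ hCN
      (fun i hi r hr1 hr2 => h1 i hi r hr1 hr2) b hb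
    have hup : (cntF f (SS B M b) : ℤ) ≤ (cntF f (SS B M b + Cφ + 1) : ℤ)
        ∧ (cntF f (SS B M b + Cφ + 1) : ℤ) ≤ (cntF f (SS B M b) : ℤ) + Cφ + 1 := by
      constructor
      · exact_mod_cast cntF_mono f (by omega)
      · have := cntF_le_add f (SS B M b) (Cφ + 1)
        rw [show SS B M b + Cφ + 1 = SS B M b + (Cφ + 1) from by omega]
        push_cast
        omega
    have hsame : ∑ i ∈ Finset.range b, (((if E i then 1 else 0 : ℕ)) : ℤ) * NN B M i
        = ∑ i ∈ Finset.range b, (if E i then (1:ℤ) else 0) * NN B M i := by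
      apply Finset.sum_congr rfl
      intro i _
      rw [bool_cast_if]
    rw [hsame]
    have hb' : (b : ℤ) ≤ B := by exact_mod_cast hb
    have hM' : (0:ℤ) ≤ Cφ := by positivity
    rw [abs_le] at hsum ⊢
    have hBb : (b:ℤ) * Cφ ≤ (B:ℤ) * Cφ := by
      apply mul_le_mul_of_nonneg_right hb' hM'
    have hCbound : ((B:ℤ) + 6) * ((Cφ:ℤ) + 2) = (((B + 6) * (Cφ + 2) : ℕ) : ℤ) := by push_cast; ring
    constructor
    · split <;> nlinarith
    · split <;> nlinarith
  · -- T6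
    intro b hb hd
    rw [hdep] at hd
    beta_reduce
    have hfull_b := cnt_full f (E b) b (fun r' hr' => h2 b (by omega) (by omega) r' hr')
    have hfull_b1 := cnt_full f (E (b+1)) (b+1) (fun r' hr' => h2 (b+1) (by omega) (by omega) r' hr')
    have hexact := cnt_block_exact f (E b) b (fun r' hr' => h2 b (by omega) (by omega) r' hr')
    have hCb : Cφ < NN B M b := by have := hCN1 b (by omega); omega
    have hCb1 : Cφ < NN B M (b+1) := by have := hCN1 (b+1) (by omega); omega
    have e1 : (cntF f (SS B M b + Cφ + 1) : ℤ)
        = (cntF f (SS B M b) : ℤ) + (if E b then (1:ℤ) else 0) * ((Cφ:ℤ)+1) := by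
      rw [show SS B M b + Cφ + 1 = (SS B M b + Cφ) + 1 from rfl, hfull_b Cφ hCb]
    have e2 : (cntF f (SS B M (b+1) + Cφ + 1) : ℤ)
        = (cntF f (SS B M (b+1)) : ℤ) + (if E (b+1) then (1:ℤ) else 0) * ((Cφ:ℤ)+1) := by
      rw [show SS B M (b+1) + Cφ + 1 = (SS B M (b+1) + Cφ) + 1 from rfl, hfull_b1 Cφ hCb1]
    rw [bool_cast_if, bool_cast_if, e1, e2, hexact]
    ring
/-! ### The `lt` case -/

lemma exists_min_nonzero (e : ℕ → ℤ) (b : ℕ) (h : ¬ ∀ i, i ≤ b → e i = 0) :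
    ∃ i0, i0 ≤ b ∧ e i0 ≠ 0 ∧ ∀ i, i < i0 → e i = 0 := by
  push_neg at h
  obtain ⟨i, hib, hi⟩ := h
  classical
  have hex : ∃ j, e j ≠ 0 := ⟨i, hi⟩
  refine ⟨Nat.find hex, le_trans (Nat.find_min' hex hi) hib, Nat.find_spec hex, fun j hj => ?_⟩
  by_contra hne
  exact (Nat.find_min hex hj) hne

lemma dom_core {B M : ℕ} (c : ℕ) (hc : 1 ≤ c) (hM : c * (B + 5) + 1 ≤ M)
    (e : ℕ → ℤ) (he : ∀ i, |e i| ≤ c) (b i0 : ℕ) (hbB : b ≤ B) (hi0 : i0 < b)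
    (hzero : ∀ i, i < i0 → e i = 0) (hne : e i0 ≠ 0) (x : ℤ)
    (hx : |x - ∑ i ∈ Finset.range b, e i * NN B M i| ≤ c) :
    3 * c * (NN B M (i0+1) : ℤ) < |x| := by
  have hM1 : 1 ≤ M := by
    have := Nat.le_add_left 1 (c * (B + 5))
    omega
  have hdom := dominated_sum hM1 c e he b hbB i0 hi0 hzero hne
  have hNsucc : (NN B M i0 : ℤ) = (NN B M (i0+1) : ℤ) * M := by
    exact_mod_cast NN_succ_mul (show i0 < B by omega)
  have hNpos : (1:ℤ) ≤ NN B M (i0+1) := by exact_mod_cast NN_pos hM1 B (i0+1)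
  have hMz : (c : ℤ) * (B + 5) + 1 ≤ M := by exact_mod_cast hM
  have htri : |∑ i ∈ Finset.range b, e i * NN B M i| - c ≤ |x| := by
    have h1 := abs_sub_abs_le_abs_sub (∑ i ∈ Finset.range b, e i * NN B M i) x
    have h2 : |∑ i ∈ Finset.range b, e i * NN B M i - x| = |x - ∑ i ∈ Finset.range b, e i * NN B M i| := abs_sub_comm _ _
    omega
  have hBz : (0:ℤ) ≤ B := by positivity
  have hcz : (1:ℤ) ≤ c := by exact_mod_cast hc
  nlinarith [hdom, htri, hNpos, hMz, hNsucc, hcz, hBz,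
    mul_le_mul_of_nonneg_left hMz (le_trans zero_le_one hNpos)]

set_option maxHeartbeats 1000000 in
lemma lt_fprop (B : ℕ) (t₁ t₂ : TLTerm Letter) (ht1 : TProp B t₁) (ht2 : TProp B t₂) :
    FProp B (.lt t₁ t₂) := by
  obtain ⟨C₁, hC₁, hdata₁⟩ := ht1
  obtain ⟨C₂, hC₂, hdata₂⟩ := ht2
  set c : ℕ := C₁ + C₂ + 1 with hc_def
  have hc : 1 ≤ c := by omega
  refine ⟨c * (B + 5) + 2 * c + 5, by omega, fun M hM => ?_⟩
  have hcB : c ≤ c * (B + 5) := Nat.le_mul_of_pos_right c (by omega)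
  obtain ⟨ε₁, a₁, t11, t12, t13, t14, t15, t16, t17⟩ := hdata₁ M (by omega)
  obtain ⟨ε₂, a₂, t21, t22, t23, t24, t25, t26, t27⟩ := hdata₂ M (by omega)
  have hM1 : 1 ≤ M := by omega
  set d : ℕ := max t₁.depth t₂.depth with hd_def
  have hdep : (TLFormula.lt t₁ t₂).depth = d := rfl
  set e : ℕ → ℤ := fun i => (ε₁ i : ℤ) - ε₂ i with he_def
  set D : ℕ → ℤ := fun b => a₁ b - a₂ b with hD_def
  have he : ∀ i, |e i| ≤ c := by
    intro i
    have := t11 i; have := t21 i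
    rw [he_def]
    rw [abs_le]
    constructor <;> push_cast <;> omega
  have hDsum : ∀ b, b ≤ B → |D b - ∑ i ∈ Finset.range b, e i * NN B M i| ≤ c := by
    intro b hb
    have e1 := t16 b hb
    have e2 := t26 b hb
    have hsplit : ∑ i ∈ Finset.range b, e i * NN B M i
        = (∑ i ∈ Finset.range b, (ε₁ i : ℤ) * NN B M i)
          - ∑ i ∈ Finset.range b, (ε₂ i : ℤ) * NN B M i := by
      rw [← Finset.sum_sub_distrib]
      apply Finset.sum_congr rfl
      intro i _
      rw [he_def]; ring
    rw [hD_def, hsplit]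
    have habs := abs_sub (a₁ b - ∑ i ∈ Finset.range b, (ε₁ i : ℤ) * NN B M i)
      (a₂ b - ∑ i ∈ Finset.range b, (ε₂ i : ℤ) * NN B M i)
    have heq : a₁ b - a₂ b - ((∑ i ∈ Finset.range b, (ε₁ i : ℤ) * NN B M i)
          - ∑ i ∈ Finset.range b, (ε₂ i : ℤ) * NN B M i)
        = (a₁ b - ∑ i ∈ Finset.range b, (ε₁ i : ℤ) * NN B M i)
          - (a₂ b - ∑ i ∈ Finset.range b, (ε₂ i : ℤ) * NN B M i) := by ring
    rw [heq]
    omega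
  have hdiff_tail : ∀ b, b < B → ∀ r, C₁ + C₂ ≤ r → r < NN B M b →
      ((t₁.val (Wd B M) (SS B M b + r) : ℤ) - (t₂.val (Wd B M) (SS B M b + r) : ℤ))
        = D b + e b * r := by
    intro b hb r hr1 hr2
    rw [t14 b hb r (by omega) hr2, t24 b hb r (by omega) hr2, hD_def, he_def]
    ring
  have hdiff_full : ∀ b, b < B → d ≤ b → ∀ r, r < NN B M b →
      ((t₁.val (Wd B M) (SS B M b + r) : ℤ) - (t₂.val (Wd B M) (SS B M b + r) : ℤ))
        = D b + e b * r := by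
    intro b hb hd r hr2
    rw [t15 b hb (by omega) r hr2, t25 b hb (by omega) r hr2, hD_def, he_def]
    ring
  have hestab : ∀ i, i + 2 < B → d ≤ i + 1 → e i = e (i + 2) := by
    intro i hi hdi
    rw [he_def]
    beta_reduce
    rw [t13 i hi (by omega), t23 i hi (by omega)]
  have hezero : d = 0 → ∀ i, e i = 0 := by
    intro h0 i
    rw [he_def]
    beta_reduce
    rw [t12 (by omega) i, t22 (by omega) i]
    ring
  have hD6 : ∀ b, b + 1 < B → d ≤ b →
      D (b + 1) = D b + e b * ((NN B M b : ℤ) - 1) + e (b + 1) := by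
    intro b hb hdb
    rw [hD_def, he_def]
    beta_reduce
    rw [t17 b hb (by omega), t27 b hb (by omega)]
    ring
  have hsat : ∀ p, (TLFormula.lt t₁ t₂).sat (Wd B M) p
      = decide ((t₁.val (Wd B M) p : ℤ) - (t₂.val (Wd B M) p : ℤ) < 0) := by
    intro p
    show decide (t₁.val (Wd B M) p < t₂.val (Wd B M) p) = _
    rw [decide_eq_decide]
    omega
  have hNbig : ∀ b, b < B → c * (B + 5) + 2 * c + 5 ≤ NN B M b := fun b hb =>
    le_trans hM (NN_ge_M hb)
  -- the tail value of a block
  refine ⟨fun b => decide (D b + e b * ((NN B M b : ℤ) - 1) < 0), ?_, ?_, ?_⟩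
  · -- F1 : tail constancy
    intro b hb r hr1 hr2
    beta_reduce
    rw [hsat, hdiff_tail b hb r (by omega) hr2, decide_eq_decide]
    clear hdata₁ hdata₂ t11 t12 t13 t14 t15 t16 t17 t21 t22 t23 t24 t25 t26 t27 hdiff_tail hdiff_full hsat hestab hezero hD6
    have hNb := hNbig b hb
    by_cases hall : ∀ i, i ≤ b → e i = 0
    · rw [hall b (le_refl _)]
      simp
    · obtain ⟨i0, hi0b, hi0ne, hi0min⟩ := exists_min_nonzero e b hall
      rcases Nat.lt_or_ge i0 b with hlt | hge
      · -- dominated case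
        have hbig := dom_core c hc (by omega) e he b i0 (by omega) hlt hi0min hi0ne
          (D b) (hDsum b (by omega))
        have hNmono : (NN B M b : ℤ) ≤ NN B M (i0+1) := by
          exact_mod_cast NN_mono hM1 (show i0 + 1 ≤ b by omega)
        have hr2' : (r : ℤ) < NN B M b := by exact_mod_cast hr2
        have hrnn : (0:ℤ) ≤ r := by positivity
        have hcz : (1:ℤ) ≤ c := by exact_mod_cast hc
        have hkey1 : |e b * r| < |D b| := by
          rw [abs_mul, abs_of_nonneg hrnn]
          have := he b
          nlinarith [abs_nonneg (e b)]
        have hkey2 : |e b * ((NN B M b : ℤ) - 1)| < |D b| := by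
          rw [abs_mul]
          have h1 : |(NN B M b : ℤ) - 1| = (NN B M b : ℤ) - 1 := by
            rw [abs_of_nonneg]
            have : (1:ℤ) ≤ NN B M b := by exact_mod_cast NN_pos hM1 B b
            omega
          rw [h1]
          have := he b
          nlinarith [abs_nonneg (e b), NN_pos hM1 B b]
        rw [sign_stable hkey1, sign_stable hkey2]
      · -- i0 = b : bounded D b, strong slope
        have hi0' : i0 = b := by omega
        rw [hi0'] at hi0ne hi0min
        have hDb : |D b| ≤ c := by
          have := hDsum b (by omega)
          rw [Finset.sum_eq_zero (fun i hi => by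
            rw [hi0min i (Finset.mem_range.mp hi)]; ring)] at this
          simpa using this
        have hcz : (1:ℤ) ≤ c := by exact_mod_cast hc
        have hDb' := abs_le.mp hDb
        have hr1' : 2 * (c:ℤ) + 1 ≤ r := by
          have : 2 * c + 1 ≤ r := by omega
          exact_mod_cast this
        have hNb' : 2 * (c:ℤ) + 1 ≤ (NN B M b : ℤ) - 1 := by
          have : 2 * c + 2 ≤ NN B M b := by omega
          push_cast
          omega
        rcases lt_trichotomy (e b) 0 with hneg | hzero | hpos
        · constructor <;> intro <;> nlinarith
        · exact absurd hzero hi0ne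
        · constructor <;> intro <;> nlinarith
  · -- F2 : whole-block constancy for deep blocks
    intro b hb hdb r hr
    rw [hdep] at hdb
    beta_reduce
    rw [hsat, hdiff_full b hb (by omega) r hr, decide_eq_decide]
    clear hdata₁ hdata₂ t11 t12 t13 t14 t15 t16 t17 t21 t22 t23 t24 t25 t26 t27 hdiff_tail hdiff_full hsat hD6
    by_cases hall : ∀ i, i ≤ b → e i = 0
    · rw [hall b (le_refl _)]
      simp
    · obtain ⟨i0, hi0b, hi0ne, hi0min⟩ := exists_min_nonzero e b hall
      have hd1 : 1 ≤ d := by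
        by_contra h0
        exact hi0ne (hezero (by omega) i0)
      have hlt : i0 < b := by
        rcases Nat.lt_or_ge i0 b with h | h
        · exact h
        · exfalso
          have hi0 : i0 = b := by omega
          have := hestab (b - 2) (by omega) (by omega)
          rw [show b - 2 + 2 = b by omega] at this
          rw [hi0] at hi0ne
          rw [← this] at hi0ne
          exact hi0ne (hi0min (b-2) (by omega))
      have hbig := dom_core c hc (by omega) e he b i0 (by omega) hlt hi0min hi0ne
        (D b) (hDsum b (by omega))
      have hNmono : (NN B M b : ℤ) ≤ NN B M (i0+1) := by
        exact_mod_cast NN_mono hM1 (show i0 + 1 ≤ b by omega)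
      have hr2' : (r : ℤ) < NN B M b := by exact_mod_cast hr
      have hrnn : (0:ℤ) ≤ r := by positivity
      have hcz : (1:ℤ) ≤ c := by exact_mod_cast hc
      have hkey1 : |e b * r| < |D b| := by
        rw [abs_mul, abs_of_nonneg hrnn]
        have := he b
        nlinarith [abs_nonneg (e b)]
      have hkey2 : |e b * ((NN B M b : ℤ) - 1)| < |D b| := by
        rw [abs_mul]
        have h1 : |(NN B M b : ℤ) - 1| = (NN B M b : ℤ) - 1 := by
          rw [abs_of_nonneg]
          have : (1:ℤ) ≤ NN B M b := by exact_mod_cast NN_pos hM1 B b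
          omega
        rw [h1]
        have := he b
        nlinarith [abs_nonneg (e b), NN_pos hM1 B b]
      rw [sign_stable hkey1, sign_stable hkey2]
  · -- F3 : stability across two blocks
    intro b hb hdb
    rw [hdep] at hdb
    beta_reduce
    rw [decide_eq_decide]
    have he2 : e (b + 2) = e b := (hestab b hb (by omega)).symm
    have hd6a := hD6 b (by omega) (by omega)
    have hd6b := hD6 (b+1) (by omega) (by omega)
    set X : ℤ := D b + e b * ((NN B M b : ℤ) - 1) with hX
    have hY : D (b+2) + e (b+2) * ((NN B M (b+2) : ℤ) - 1)
        = X + e (b+1) * NN B M (b+1) + e b * NN B M (b+2) := by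
      rw [show b + 2 = (b + 1) + 1 from rfl] at *
      rw [hd6b, hd6a, he2, hX]
      ring
    rw [hY]
    clear hdata₁ hdata₂ t11 t12 t13 t14 t15 t16 t17 t21 t22 t23 t24 t25 t26 t27 hdiff_tail hdiff_full hsat hD6 hd6a hd6b hY
    by_cases hall : e b = 0 ∧ e (b+1) = 0
    · rw [hall.1, hall.2]
      norm_num
    · have hd1 : 1 ≤ d := by
        by_contra h0
        have := hezero (by omega)
        exact hall ⟨this b, this (b+1)⟩
      have hcz : (1:ℤ) ≤ c := by exact_mod_cast hc
      have hN1 : (1:ℤ) ≤ NN B M b := by exact_mod_cast NN_pos hM1 B b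
      have hNmono1 : (NN B M (b+1) : ℤ) ≤ NN B M b := by
        exact_mod_cast NN_mono hM1 (show b ≤ b + 1 by omega)
      have hNmono2 : (NN B M (b+2) : ℤ) ≤ NN B M b := by
        exact_mod_cast NN_mono hM1 (show b ≤ b + 2 by omega)
      have hNN2pos : (1:ℤ) ≤ NN B M (b+2) := by exact_mod_cast NN_pos hM1 B (b+2)
      have hNN1pos : (1:ℤ) ≤ NN B M (b+1) := by exact_mod_cast NN_pos hM1 B (b+1)
      by_cases hlow : ∀ i, i < b → e i = 0
      · -- small D b, e (b+1) = 0, e b ≠ 0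
        have heb1 : e (b+1) = 0 := by
          have hb1 : 1 ≤ b := by omega
          have := hestab (b-1) (by omega) (by omega)
          rw [show b - 1 + 2 = b + 1 by omega] at this
          rw [← this]
          exact hlow (b-1) (by omega)
        have hebne : e b ≠ 0 := by
          intro h0
          exact hall ⟨h0, heb1⟩
        have hDb : |D b| ≤ c := by
          have := hDsum b (by omega)
          rw [Finset.sum_eq_zero (fun i hi => by
            rw [hlow i (Finset.mem_range.mp hi)]; ring)] at this
          simpa using this
        have hDb' := abs_le.mp hDb
        have hNb : c * (B + 5) + 2 * c + 5 ≤ NN B M b := hNbig b (by omega)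
        have hNb' : 2 * (c:ℤ) + 2 ≤ (NN B M b : ℤ) := by
          have : 2 * c + 2 ≤ NN B M b := by omega
          exact_mod_cast this
        rw [heb1]
        simp only [zero_mul, add_zero]
        rcases lt_trichotomy (e b) 0 with hneg | hzero | hpos
        · have q1 : e b * ((NN B M b : ℤ) - 1) ≤ -((NN B M b : ℤ) - 1) := by
            have := mul_le_mul_of_nonneg_right (show e b ≤ -1 by omega)
              (show (0:ℤ) ≤ (NN B M b : ℤ) - 1 by linarith)
            linarith
          have q2 : e b * (NN B M (b+2) : ℤ) ≤ 0 := by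
            apply mul_nonpos_iff.mpr
            right
            exact ⟨by omega, by positivity⟩
          have hXneg : X < 0 := by rw [hX]; linarith
          constructor <;> intro <;> linarith
        · exact absurd hzero hebne
        · have q1 : ((NN B M b : ℤ) - 1) ≤ e b * ((NN B M b : ℤ) - 1) :=
            le_mul_of_one_le_left (by linarith) (by omega)
          have q2 : (0:ℤ) ≤ e b * NN B M (b+2) := mul_nonneg (by omega) (by positivity)
          have hXpos : 0 < X := by rw [hX]; linarith
          constructor <;> intro <;> linarith
      · -- dominated case
        obtain ⟨i0, hi0b, hi0ne, hi0min⟩ := exists_min_nonzero e (b-1)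
          (by push_neg at hlow ⊢; obtain ⟨i, hi, hne⟩ := hlow; exact ⟨i, by omega, hne⟩)
        have hlt : i0 < b := by omega
        have hbig := dom_core c hc (by omega) e he b i0 (by omega) hlt hi0min hi0ne
          (D b) (hDsum b (by omega))
        have hNmono : (NN B M b : ℤ) ≤ NN B M (i0+1) := by
          exact_mod_cast NN_mono hM1 (show i0 + 1 ≤ b by omega)
        have h1 : |e b * ((NN B M b : ℤ) - 1)| ≤ (c:ℤ) * NN B M b := by
          rw [abs_mul]
          apply mul_le_mul (he b) ?_ (abs_nonneg _) (by positivity)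
          rw [abs_of_nonneg (show (0:ℤ) ≤ (NN B M b : ℤ) - 1 by linarith)]
          linarith
        have hkeyX : |X| > 2 * (c:ℤ) * (NN B M b : ℤ) := by
          have h3 : |D b| - |e b * ((NN B M b : ℤ) - 1)| ≤ |X| := by
            rw [hX]
            have h5 := abs_sub_abs_le_abs_sub (D b) (-(e b * ((NN B M b : ℤ) - 1)))
            simp only [abs_neg, sub_neg_eq_add] at h5
            linarith
          have h4 : 3 * (c:ℤ) * (NN B M b : ℤ) ≤ 3 * (c:ℤ) * NN B M (i0+1) := by
            have h6 : (0:ℤ) ≤ 3 * (c:ℤ) := by positivity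
            calc 3 * (c:ℤ) * (NN B M b : ℤ) = (3 * (c:ℤ)) * (NN B M b : ℤ) := by ring
            _ ≤ (3 * (c:ℤ)) * NN B M (i0+1) := mul_le_mul_of_nonneg_left hNmono h6
            _ = 3 * (c:ℤ) * NN B M (i0+1) := by ring
          linarith
        have hkeyY : |e (b+1) * NN B M (b+1) + e b * NN B M (b+2)| < |X| := by
          have h1' : |e (b+1) * NN B M (b+1)| ≤ (c:ℤ) * NN B M b := by
            rw [abs_mul]
            apply mul_le_mul (he (b+1)) ?_ (abs_nonneg _) (by positivity)
            rw [abs_of_nonneg (show (0:ℤ) ≤ (NN B M (b+1) : ℤ) by positivity)]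
            linarith
          have h2' : |e b * NN B M (b+2)| ≤ (c:ℤ) * NN B M b := by
            rw [abs_mul]
            apply mul_le_mul (he b) ?_ (abs_nonneg _) (by positivity)
            rw [abs_of_nonneg (show (0:ℤ) ≤ (NN B M (b+2) : ℤ) by positivity)]
            linarith
          have habs := abs_add_le (e (b+1) * NN B M (b+1)) (e b * NN B M (b+2))
          linarith
        have := sign_stable hkeyY
        rw [show X + e (b+1) * NN B M (b+1) + e b * NN B M (b+2)
          = X + (e (b+1) * NN B M (b+1) + e b * NN B M (b+2)) by ring]
        rw [this]
/-! ### Assembling the lower bound -/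

mutual
theorem fprop_all (B : ℕ) : ∀ φ : TLFormula Letter, FProp B φ
  | .sym c => sym_fprop B c
  | .lt t₁ t₂ => lt_fprop B t₁ t₂ (tprop_all B t₁) (tprop_all B t₂)
  | .not φ => not_fprop B φ (fprop_all B φ)
  | .and φ₁ φ₂ => and_fprop B φ₁ φ₂ (fprop_all B φ₁) (fprop_all B φ₂)
theorem tprop_all (B : ℕ) : ∀ t : TLTerm Letter, TProp B t
  | .countL φ => countL_tprop B φ (fprop_all B φ)
  | .add t₁ t₂ => add_tprop B t₁ t₂ (tprop_all B t₁) (tprop_all B t₂)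
  | .one => one_tprop B
end

lemma SS_zero (B M : ℕ) : SS B M 0 = 0 := rfl

lemma SS_le_SS (B M : ℕ) {b b' : ℕ} (h : b ≤ b') : SS B M b ≤ SS B M b' := by
  obtain ⟨d, rfl⟩ := Nat.exists_eq_add_of_le h
  induction d with
  | zero => simp
  | succ d ih =>
    rw [show b + (d+1) = (b+d)+1 by ring, SS_succ]
    omega

theorem lower_bound (k : ℕ) (φ : TLFormula Letter) (hdep : φ.depth ≤ k) :
    ¬ SolvesNTP φ (k + 3) := by
  intro hsolves
  obtain ⟨C, hC, hdata⟩ := fprop_all (k+3) φ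
  set M : ℕ := C + 1 with hM
  obtain ⟨E, h1, h2, h3⟩ := hdata M (by omega)
  have hM1 : 1 ≤ M := by omega
  have hWmem : Wd (k+3) M ∈ altplus (k+3) :=
    (mem_altplus (k+3) _).mpr ⟨blist (k+3) M, blist_length (k+3) M, blist_pos hM1, rfl⟩
  set i : ℕ := SS (k+3) M (k+1) with hi
  have hNN0 : M ≤ NN (k+3) M 0 := NN_ge_M (by omega)
  have hi1 : 1 ≤ i := by
    have h0 : SS (k+3) M 1 ≤ SS (k+3) M (k+1) := SS_le_SS (k+3) M (by omega)
    have h01 : SS (k+3) M 1 = NN (k+3) M 0 := by rw [SS_succ, SS_zero]; omega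
    omega
  have hilen : i ≤ (Wd (k+3) M).length := by
    rw [Wd_length]
    exact SS_le_SS (k+3) M (by omega)
  have hdecomp := blist_decomp (show k + 1 < k + 3 by omega) (M := M)
  have htake : (Wd (k+3) M).take i
      = blocks Letter.a ((List.range (k+1)).map (NN (k+3) M)) := by
    unfold Wd
    rw [hdecomp, blocks_append]
    apply List.take_left'
    rw [blocks_length, hi]
    rfl
  have htakemem : (Wd (k+3) M).take i ∈ altplus (k+1) := by
    rw [htake]
    refine (mem_altplus (k+1) _).mpr ⟨(List.range (k+1)).map (NN (k+3) M), by simp, ?_, rfl⟩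
    intro n hn
    simp only [List.mem_map] at hn
    obtain ⟨b, _, rfl⟩ := hn
    exact NN_pos hM1 (k+3) b
  have hA := hsolves (Wd (k+3) M) hWmem i hi1 hilen
  have hnotmem : ¬ ((Wd (k+3) M).take i ∈ altplus (k+3)) := by
    intro hmem
    have := altplus_unique htakemem hmem
    omega
  have hsatfalse : φ.sat (Wd (k+3) M) (i - 1) = false := by
    have hne : ¬ (φ.sat ((Wd (k+3) M).take i) (i-1) = true) := fun hs => hnotmem (hA.mpr hs)
    rw [TLFormula.sat_take φ (Wd (k+3) M) i (i-1) (by omega)] at hne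
    cases h : φ.sat (Wd (k+3) M) (i-1)
    · rfl
    · exact absurd h hne
  have hBfull := hsolves (Wd (k+3) M) hWmem ((Wd (k+3) M).length) (by omega) (le_refl _)
  rw [List.take_length] at hBfull
  have hsattrue : φ.sat (Wd (k+3) M) ((Wd (k+3) M).length - 1) = true := hBfull.mp hWmem
  have hNk : M ≤ NN (k+3) M k := NN_ge_M (by omega)
  have hNk2 : M ≤ NN (k+3) M (k+2) := NN_ge_M (by omega)
  have hpos1 : i - 1 = SS (k+3) M k + (NN (k+3) M k - 1) := by
    rw [hi, SS_succ]
    omega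
  have hpos2 : (Wd (k+3) M).length - 1 = SS (k+3) M (k+2) + (NN (k+3) M (k+2) - 1) := by
    have h2 : k + 3 = (k+2) + 1 := by ring
    rw [Wd_length, h2, SS_succ, ← h2]
    omega
  have hE1 : φ.sat (Wd (k+3) M) (i - 1) = E k := by
    rw [hpos1]
    exact h1 k (by omega) (NN (k+3) M k - 1) (by omega) (by omega)
  have hE2 : φ.sat (Wd (k+3) M) ((Wd (k+3) M).length - 1) = E (k+2) := by
    rw [hpos2]
    exact h1 (k+2) (by omega) (NN (k+3) M (k+2) - 1) (by omega) (by omega)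
  have hstab := h3 k (by omega) (by omega)
  rw [hsatfalse] at hE1
  rw [hsattrue] at hE2
  rw [← hE1, ← hE2] at hstab
  exact absurd hstab (by simp)

/-- For every `k > 0`, some TL[#←] formula of depth `k+1` solves the next-token
prediction problem for `L_{k+3}`, but no TL[#←] formula of depth `k` does. -/
theorem stmt10 (k : ℕ) (hk : 0 < k) :
    (∃ φ : TLFormula Letter, φ.depth ≤ k + 1 ∧ SolvesNTP φ (k + 3)) ∧
    ¬(∃ φ : TLFormula Letter, φ.depth ≤ k ∧ SolvesNTP φ (k + 3)) := by
  constructor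
  · refine ⟨chi (k+3), ?_, chi_solves k⟩
    rw [show k + 3 = (k+1) + 2 by ring, chi_depth]
  · rintro ⟨φ, hd, hs⟩
    exact lower_bound k φ hd hs
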